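/- Suppose the phase errors satisfy $|e_m| \leq \pi\,(2^{-B})^{N_t/2^B}$ for all $m$, with $B \geq 1$ and $N_t \geq 2^B$ so that the bound is at most $\pi/2$. Then the sequential-training efficiency satisfies $\eta = Q_d/Q^\star \geq \frac{1}{Q^\star}\left(\sum_{m=1}^M \beta_m + \sum_{i\neq j}\sqrt{\beta_i\beta_j}\cos^2\left(\pi\,2^{-B N_t/2^B}\right)\right)$, where $Q^\star = \sum_m \beta_m + \sum_{i\neq j}\sqrt{\beta_i\beta_j}$ and $Q_d \geq \sum_m \beta_m + \sum_{i\neq j}\sqrt{\beta_i\beta_j}\cos(e_i)\cos(e_j)$. -/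

import Mathlib

open Real Finset

theorem stmt_10 (M : ℕ) (hM : 2 ≤ M) (β : Fin M → ℝ) (hβ : ∀ m, 0 < β m)
    (e : Fin M → ℝ) (B : ℕ) (hB : 1 ≤ B) (Nt : ℝ) (hNt : (2 : ℝ) ^ B ≤ Nt)
    (hbound : π * ((2 : ℝ) ^ (-(B : ℝ))) ^ (Nt / 2 ^ B) ≤ π / 2)
    (he : ∀ m, |e m| ≤ π * ((2 : ℝ) ^ (-(B : ℝ))) ^ (Nt / 2 ^ B))
    (Qd Qstar : ℝ)
    (hQstar : Qstar = ∑ m, β m +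
      ∑ i, ∑ j, if i ≠ j then Real.sqrt (β i * β j) else 0)
    (hQd : Qd ≥ ∑ m, β m +
      ∑ i, ∑ j, if i ≠ j then
        Real.sqrt (β i * β j) * Real.cos (e i) * Real.cos (e j) else 0) :
    Qd / Qstar ≥ (1 / Qstar) * (∑ m, β m +
      ∑ i, ∑ j, if i ≠ j then
        Real.sqrt (β i * β j) *
          Real.cos (π * ((2 : ℝ) ^ (-(B : ℝ))) ^ (Nt / 2 ^ B)) ^ 2 else 0) := by
  set eb := π * ((2 : ℝ) ^ (-(B : ℝ))) ^ (Nt / 2 ^ B) with hebdef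
  have heb0 : 0 ≤ eb := by
    apply mul_nonneg Real.pi_pos.le
    positivity
  have hcoseb0 : 0 ≤ Real.cos eb :=
    Real.cos_nonneg_of_mem_Icc ⟨by linarith [Real.pi_pos], hbound⟩
  have hcos : ∀ m, Real.cos eb ≤ Real.cos (e m) := by
    intro m
    have h := he m
    rw [← Real.cos_abs (e m)]
    exact Real.cos_le_cos_of_nonneg_of_le_pi (abs_nonneg _)
      (le_trans hbound (by linarith [Real.pi_pos])) h
  -- Qstar > 0
  have hsum0 : 0 < ∑ m, β m := by
    apply Finset.sum_pos (fun i _ => hβ i)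
    exact Finset.univ_nonempty_iff.mpr (Fin.pos_iff_nonempty.mp (by omega))
  have hoff : 0 ≤ ∑ i, ∑ j, if i ≠ j then Real.sqrt (β i * β j) else 0 := by
    apply Finset.sum_nonneg; intro i _
    apply Finset.sum_nonneg; intro j _
    split <;> positivity
  have hQs : 0 < Qstar := by rw [hQstar]; linarith
  have hkey : (∑ m, β m +
      ∑ i, ∑ j, if i ≠ j then
        Real.sqrt (β i * β j) * Real.cos eb ^ 2 else 0) ≤ Qd := by
    refine le_trans ?_ hQd
    apply add_le_add_right
    apply Finset.sum_le_sum; intro i _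
    apply Finset.sum_le_sum; intro j _
    split
    · have hs : 0 ≤ Real.sqrt (β i * β j) := Real.sqrt_nonneg _
      have h1 := hcos i
      have h2 := hcos j
      have : Real.cos eb ^ 2 ≤ Real.cos (e i) * Real.cos (e j) := by
        rw [sq]
        exact mul_le_mul h1 h2 hcoseb0 (le_trans hcoseb0 h1)
      calc Real.sqrt (β i * β j) * Real.cos eb ^ 2
          ≤ Real.sqrt (β i * β j) * (Real.cos (e i) * Real.cos (e j)) :=
            mul_le_mul_of_nonneg_left this hs
        _ = Real.sqrt (β i * β j) * Real.cos (e i) * Real.cos (e j) := by ring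
    · exact le_rfl
  rw [ge_iff_le, one_div, mul_comm, ← div_eq_mul_inv, div_le_div_iff_of_pos_right hQs]
  exact hkey
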